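/- Let F_1, ..., F_5 be five linearly independent homogeneous polynomials of degree 2 in F_q[x_0, x_1, x_2, x_3]. Then |V(F_1, ..., F_5)| ≤ 1 + 2q, which is strictly smaller than the Tsfasman–Boguslavsky bound T_5 = 2(1+q) for five quadrics in P^3. -/

import Mathlib

open MvPolynomial

section Helpers

variable {F : Type*} [Field F]

/-! ### Linear forms as polynomials -/

noncomputable def linPoly (φ : (Fin 4 → F) →ₗ[F] F) : MvPolynomial (Fin 4) F :=
  ∑ i : Fin 4, MvPolynomial.C (φ (Pi.single i 1)) * MvPolynomial.X i

lemma eval_linPoly (φ : (Fin 4 → F) →ₗ[F] F) (x : Fin 4 → F) :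
    MvPolynomial.eval x (linPoly φ) = φ x := by
  have hx : x = ∑ i : Fin 4, x i • (Pi.single i (1:F) : Fin 4 → F) := by
    ext j; simp [Pi.single_apply]
  rw [linPoly, map_sum]
  conv_rhs => rw [hx]
  rw [map_sum]
  refine Finset.sum_congr rfl fun i _ => ?_
  simp [mul_comm]

lemma linPoly_hom (φ : (Fin 4 → F) →ₗ[F] F) : (linPoly φ).IsHomogeneous 1 := by
  apply MvPolynomial.IsHomogeneous.sum
  intro i _
  have h1 : (MvPolynomial.C (φ (Pi.single i 1)) : MvPolynomial (Fin 4) F).IsHomogeneous 0 :=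
    MvPolynomial.isHomogeneous_C _ _
  have h2 : (MvPolynomial.X i : MvPolynomial (Fin 4) F).IsHomogeneous 1 :=
    MvPolynomial.isHomogeneous_X _ _
  simpa using h1.mul h2

/-! ### Polarization identity for quadratic forms -/

lemma polar_monomial (m : Fin 4 →₀ ℕ) (hm : m 0 + m 1 + m 2 + m 3 = 2) (c : F)
    (u v : Fin 4 → F) (s t : F) :
    MvPolynomial.eval (s • u + t • v) (monomial m c) =
      s^2 * MvPolynomial.eval u (monomial m c)
      + s*t*(MvPolynomial.eval (u+v) (monomial m c) - MvPolynomial.eval u (monomial m c)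
              - MvPolynomial.eval v (monomial m c))
      + t^2 * MvPolynomial.eval v (monomial m c) := by
  have key : ∀ x : Fin 4 → F, MvPolynomial.eval x (monomial m c)
      = c * (x 0 ^ m 0 * x 1 ^ m 1 * x 2 ^ m 2 * x 3 ^ m 3) := by
    intro x
    rw [eval_monomial, Finsupp.prod_fintype _ _ (fun i => pow_zero _), Fin.prod_univ_four]
  simp only [key, Pi.add_apply, Pi.smul_apply, smul_eq_mul]
  have h0 : m 0 = 0 ∨ m 0 = 1 ∨ m 0 = 2 := by omega
  have h1 : m 1 = 0 ∨ m 1 = 1 ∨ m 1 = 2 := by omega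
  have h2 : m 2 = 0 ∨ m 2 = 1 ∨ m 2 = 2 := by omega
  have h3 : m 3 = 0 ∨ m 3 = 1 ∨ m 3 = 2 := by omega
  rcases h0 with h0 | h0 | h0 <;> rcases h1 with h1 | h1 | h1 <;>
    rcases h2 with h2 | h2 | h2 <;> rcases h3 with h3 | h3 | h3 <;>
    first
      | omega
      | (rw [h0, h1, h2, h3]; ring)

lemma polar {f : MvPolynomial (Fin 4) F} (hf : f.IsHomogeneous 2) (u v : Fin 4 → F) (s t : F) :
    MvPolynomial.eval (s • u + t • v) f =
      s^2 * MvPolynomial.eval u f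
      + s*t*(MvPolynomial.eval (u+v) f - MvPolynomial.eval u f - MvPolynomial.eval v f)
      + t^2 * MvPolynomial.eval v f := by
  conv_lhs => rw [← f.support_sum_monomial_coeff]
  conv_rhs => rw [← f.support_sum_monomial_coeff]
  rw [map_sum, map_sum, map_sum, map_sum]
  rw [Finset.mul_sum, ← Finset.sum_sub_distrib, ← Finset.sum_sub_distrib, Finset.mul_sum,
    Finset.mul_sum, ← Finset.sum_add_distrib, ← Finset.sum_add_distrib]
  refine Finset.sum_congr rfl fun m hm => ?_
  have hdeg : m 0 + m 1 + m 2 + m 3 = 2 := by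
    have h := hf (MvPolynomial.mem_support_iff.mp hm)
    rw [Finsupp.weight_apply, Finsupp.sum_fintype _ _ (fun i => by simp), Fin.sum_univ_four] at h
    simpa using h
  exact polar_monomial m hdeg _ u v s t

lemma eval_smul_sq {f : MvPolynomial (Fin 4) F} (hf : f.IsHomogeneous 2) (c : F)
    (w : Fin 4 → F) : MvPolynomial.eval (c • w) f = c^2 * MvPolynomial.eval w f := by
  have := polar hf w 0 c 0
  simpa using this

/-! ### The ten quadratic monomials -/

noncomputable def epair (i j : Fin 4) : Fin 4 →₀ ℕ := Finsupp.single i 1 + Finsupp.single j 1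

abbrev PairIdx := {p : Fin 4 × Fin 4 // p.1 ≤ p.2}

noncomputable def tenMons : PairIdx → MvPolynomial (Fin 4) F := fun p =>
  monomial (epair p.1.1 p.1.2) 1

lemma card_pairIdx : Fintype.card PairIdx = 10 := by decide

lemma hom2_le_span :
    homogeneousSubmodule (Fin 4) F 2 ≤ Submodule.span F (Set.range (tenMons (F := F))) := by
  intro f hf
  rw [MvPolynomial.mem_homogeneousSubmodule] at hf
  rw [← f.support_sum_monomial_coeff]
  apply Submodule.sum_mem
  intro m hm
  have hdeg : m 0 + m 1 + m 2 + m 3 = 2 := by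
    have h := hf (MvPolynomial.mem_support_iff.mp hm)
    rw [Finsupp.weight_apply, Finsupp.sum_fintype _ _ (fun i => by simp), Fin.sum_univ_four] at h
    simpa using h
  have key : ∃ i j : Fin 4, i ≤ j ∧ m = epair i j := by
    have h0 : m 0 = 0 ∨ m 0 = 1 ∨ m 0 = 2 := by omega
    have h1 : m 1 = 0 ∨ m 1 = 1 ∨ m 1 = 2 := by omega
    have h2 : m 2 = 0 ∨ m 2 = 1 ∨ m 2 = 2 := by omega
    have h3 : m 3 = 0 ∨ m 3 = 1 ∨ m 3 = 2 := by omega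
    rcases h0 with h0 | h0 | h0 <;> rcases h1 with h1 | h1 | h1 <;>
      rcases h2 with h2 | h2 | h2 <;> rcases h3 with h3 | h3 | h3 <;>
      first
        | omega
        | (refine ⟨0, 0, by decide, ?_⟩; ext x; fin_cases x <;> simp [epair, Finsupp.single_apply, h0, h1, h2, h3] <;> done)
        | (refine ⟨0, 1, by decide, ?_⟩; ext x; fin_cases x <;> simp [epair, Finsupp.single_apply, h0, h1, h2, h3] <;> done)
        | (refine ⟨0, 2, by decide, ?_⟩; ext x; fin_cases x <;> simp [epair, Finsupp.single_apply, h0, h1, h2, h3] <;> done)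
        | (refine ⟨0, 3, by decide, ?_⟩; ext x; fin_cases x <;> simp [epair, Finsupp.single_apply, h0, h1, h2, h3] <;> done)
        | (refine ⟨1, 1, by decide, ?_⟩; ext x; fin_cases x <;> simp [epair, Finsupp.single_apply, h0, h1, h2, h3] <;> done)
        | (refine ⟨1, 2, by decide, ?_⟩; ext x; fin_cases x <;> simp [epair, Finsupp.single_apply, h0, h1, h2, h3] <;> done)
        | (refine ⟨1, 3, by decide, ?_⟩; ext x; fin_cases x <;> simp [epair, Finsupp.single_apply, h0, h1, h2, h3] <;> done)
        | (refine ⟨2, 2, by decide, ?_⟩; ext x; fin_cases x <;> simp [epair, Finsupp.single_apply, h0, h1, h2, h3] <;> done)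
        | (refine ⟨2, 3, by decide, ?_⟩; ext x; fin_cases x <;> simp [epair, Finsupp.single_apply, h0, h1, h2, h3] <;> done)
        | (refine ⟨3, 3, by decide, ?_⟩; ext x; fin_cases x <;> simp [epair, Finsupp.single_apply, h0, h1, h2, h3] <;> done)
  obtain ⟨i, j, hij, hk⟩ := key
  have : (monomial m (coeff m f) : MvPolynomial (Fin 4) F)
      = (coeff m f) • tenMons (F := F) ⟨(i, j), hij⟩ := by
    rw [tenMons, MvPolynomial.smul_monomial, ← hk, smul_eq_mul, mul_one]
  rw [this]
  exact Submodule.smul_mem _ _ (Submodule.subset_span ⟨_, rfl⟩)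

lemma finrank_hom2_le :
    Module.finrank F (homogeneousSubmodule (Fin 4) F 2) ≤ 10 := by
  have hfd : FiniteDimensional F (Submodule.span F (Set.range (tenMons (F := F)))) :=
    FiniteDimensional.span_of_finite _ (Set.finite_range _)
  calc Module.finrank F (homogeneousSubmodule (Fin 4) F 2)
      ≤ Module.finrank F (Submodule.span F (Set.range (tenMons (F := F)))) :=
        Submodule.finrank_mono hom2_le_span
    _ ≤ Fintype.card PairIdx := finrank_range_le_card _
    _ = 10 := card_pairIdx

/-! ### The central linear-algebra contradiction -/

lemma main_contra (Fs : Fin 5 → MvPolynomial (Fin 4) F)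
    (hli : LinearIndependent F Fs) (hhom : ∀ i, (Fs i).IsHomogeneous 2)
    (x : Fin 6 → (Fin 4 → F))
    (hx : ∀ j i, MvPolynomial.eval (x j) (Fs i) = 0)
    (Q : Fin 6 → MvPolynomial (Fin 4) F) (hQhom : ∀ i, (Q i).IsHomogeneous 2)
    (htri : ∀ i j : Fin 6, j < i → MvPolynomial.eval (x j) (Q i) = 0)
    (hdiag : ∀ i, MvPolynomial.eval (x i) (Q i) ≠ 0) : False := by
  haveI hfd1 : FiniteDimensional F (Submodule.span F (Set.range (tenMons (F := F)))) :=
    FiniteDimensional.span_of_finite _ (Set.finite_range _)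
  haveI hfd : FiniteDimensional F (homogeneousSubmodule (Fin 4) F 2) :=
    Submodule.finiteDimensional_of_le hom2_le_span
  set G : Fin 5 ⊕ Fin 6 → MvPolynomial (Fin 4) F := Sum.elim Fs Q with hG
  have hind : LinearIndependent F G := by
    rw [Fintype.linearIndependent_iff]
    intro g hg
    rw [Fintype.sum_sum_type] at hg
    have heval : ∀ j : Fin 6, ∑ k : Fin 6, g (Sum.inr k) * MvPolynomial.eval (x j) (Q k) = 0 := by
      intro j
      have := congrArg (MvPolynomial.eval (x j)) hg
      rw [map_add, map_sum, map_sum, map_zero] at this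
      simp only [hG, Sum.elim_inl, Sum.elim_inr, MvPolynomial.smul_eval] at this
      rw [Finset.sum_congr rfl (fun k _ => by rw [hx j k, mul_zero]), Finset.sum_const_zero,
        zero_add] at this
      exact this
    have hbn : ∀ n : ℕ, ∀ k : Fin 6, (k : ℕ) < n → g (Sum.inr k) = 0 := by
      intro n
      induction n with
      | zero => exact fun k hk => absurd hk (Nat.not_lt_zero _)
      | succ n ih =>
        intro k hk
        have h := heval k
        have hsplit : ∀ j : Fin 6, j ≠ k → g (Sum.inr j) * MvPolynomial.eval (x k) (Q j) = 0 := by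
          intro j hj
          rcases lt_or_gt_of_ne hj with h' | h'
          · rw [ih j (by omega : (j : ℕ) < n), zero_mul]
          · rw [htri j k h', mul_zero]
        rw [Finset.sum_eq_single k (fun j _ hj => hsplit j hj) (by simp)] at h
        exact (mul_eq_zero.mp h).resolve_right (hdiag k)
    have hb : ∀ k : Fin 6, g (Sum.inr k) = 0 := fun k => hbn 6 k k.isLt
    have ha : ∀ i : Fin 5, g (Sum.inl i) = 0 := by
      have : ∑ i : Fin 5, g (Sum.inl i) • Fs i = 0 := by
        rw [← hg]
        have : ∑ k : Fin 6, g (Sum.inr k) • (Sum.elim Fs Q (Sum.inr k)) = 0 := by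
          apply Finset.sum_eq_zero; intro k _; rw [hb k, zero_smul]
        simp only [hG, Sum.elim_inl, Sum.elim_inr] at this ⊢
        rw [this, add_zero]
      exact fun i => Fintype.linearIndependent_iff.mp hli _ this i
    rintro (i | k)
    · exact ha i
    · exact hb k
  have hle : Submodule.span F (Set.range G) ≤ homogeneousSubmodule (Fin 4) F 2 := by
    rw [Submodule.span_le]
    rintro _ ⟨(i | k), rfl⟩
    · exact (MvPolynomial.mem_homogeneousSubmodule _ _).mpr (hhom i)
    · exact (MvPolynomial.mem_homogeneousSubmodule _ _).mpr (hQhom k)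
  have h11 : Module.finrank F (Submodule.span F (Set.range G)) = 11 := by
    rw [finrank_span_eq_card hind]
    simp
  have hmono := Submodule.finrank_mono (R := F) hle
  have hten := finrank_hom2_le (F := F)
  omega

/-! ### Functionals -/

lemma exists_funct (U : Submodule F (Fin 4 → F)) (w : Fin 4 → F) (hw : w ∉ U) :
    ∃ φ : (Fin 4 → F) →ₗ[F] F, (∀ x ∈ U, φ x = 0) ∧ φ w ≠ 0 := by
  have hnz : U.mkQ w ≠ 0 := by
    simpa [Submodule.mkQ_apply, Submodule.Quotient.mk_eq_zero] using hw
  have := (Module.forall_dual_apply_eq_zero_iff F (U.mkQ w)).not.mpr hnz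
  push_neg at this
  obtain ⟨ψ, hψ⟩ := this
  refine ⟨ψ.comp U.mkQ, fun x hx => ?_, hψ⟩
  have : U.mkQ x = 0 := by
    simpa [Submodule.mkQ_apply, Submodule.Quotient.mk_eq_zero] using hx
  simp [this]

lemma mem_span_triple {M : Type*} [AddCommGroup M] [Module F M] {x a b c : M} :
    x ∈ Submodule.span F ({a, b, c} : Set M) ↔ ∃ α β γ : F, α • a + β • b + γ • c = x := by
  constructor
  · intro h
    rw [show ({a, b, c} : Set M) = insert a {b, c} from rfl, Submodule.mem_span_insert] at h
    obtain ⟨α, z, hz, hx⟩ := h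
    obtain ⟨β, γ, hz'⟩ := Submodule.mem_span_pair.mp hz
    exact ⟨α, β, γ, by rw [hx, ← hz', add_assoc]⟩
  · rintro ⟨α, β, γ, rfl⟩
    refine Submodule.add_mem _ (Submodule.add_mem _ ?_ ?_) ?_ <;>
      exact Submodule.smul_mem _ _ (Submodule.subset_span (by simp))

end Helpers

section Geometry

variable {F : Type*} [Field F] [Fintype F]

local notation "P3" => Projectivization F (Fin 4 → F)

omit [Fintype F] in
lemma rep_spec (w : Fin 4 → F) (h : w ≠ 0) :
    ∃ c : F, c ≠ 0 ∧ (Projectivization.mk F w h).rep = c • w := by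
  have h1 := Projectivization.mk_rep (Projectivization.mk F w h)
  rw [Projectivization.mk_eq_mk_iff] at h1
  obtain ⟨a, ha⟩ := h1
  exact ⟨a, a.ne_zero, ha.symm⟩

omit [Fintype F] in
lemma eq_mk_of_rep_smul (P : P3) (w : Fin 4 → F) (hw : w ≠ 0) (c : F) (hc : c ≠ 0)
    (h : P.rep = c • w) : P = Projectivization.mk F w hw := by
  conv_lhs => rw [← Projectivization.mk_rep P]
  rw [Projectivization.mk_eq_mk_iff]
  exact ⟨Units.mk0 c hc, h.symm⟩

omit [Fintype F] in
lemma rep_ne_rep {P Q : P3} (h : P ≠ Q) : Q.rep ∉ Submodule.span F {P.rep} := by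
  intro hmem
  rw [Submodule.mem_span_singleton] at hmem
  obtain ⟨c, hc⟩ := hmem
  have hc0 : c ≠ 0 := by
    rintro rfl; exact Q.rep_nonzero (by simpa using hc.symm)
  exact h ((eq_mk_of_rep_smul Q P.rep P.rep_nonzero c hc0 hc.symm).trans
    (Projectivization.mk_rep P)).symm

def lineSet (u v : Fin 4 → F) : Set P3 := {P | P.rep ∈ Submodule.span F {u, v}}

omit [Fintype F] in
lemma mem_lineSet_mk (u v : Fin 4 → F) (w : Fin 4 → F) (hw : w ≠ 0)
    (h : w ∈ Submodule.span F {u, v}) : Projectivization.mk F w hw ∈ lineSet u v := by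
  obtain ⟨c, hc0, hc⟩ := rep_spec w hw
  simp only [lineSet, Set.mem_setOf_eq, hc]
  exact Submodule.smul_mem _ _ h

lemma lineSet_ncard (u v : Fin 4 → F) (huv : u ∉ Submodule.span F {v})
    (hvu : v ∉ Submodule.span F {u}) :
    (lineSet u v).ncard ≤ Fintype.card F + 1 := by
  obtain ⟨φ, hφ0, hφu⟩ := exists_funct (Submodule.span F {v}) u huv
  obtain ⟨ψ, hψ0, hψv⟩ := exists_funct (Submodule.span F {u}) v hvu
  have hφv : φ v = 0 := hφ0 v (Submodule.mem_span_singleton_self v)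
  have hψu : ψ u = 0 := hψ0 u (Submodule.mem_span_singleton_self u)
  have hu0 : u ≠ 0 := fun h => by simp [h] at hφu
  classical
  set g : P3 → Option F := fun P => if ψ P.rep = 0 then none else some (φ P.rep / ψ P.rep)
    with hg
  have key : ∀ P ∈ lineSet u v, ∃ a b : F, P.rep = a • u + b • v ∧ φ P.rep = a * φ u ∧
      ψ P.rep = b * ψ v := by
    intro P hP
    obtain ⟨a, b, hab⟩ := Submodule.mem_span_pair.mp hP
    exact ⟨a, b, hab.symm, by rw [← hab]; simp [mul_comm, hφv],
      by rw [← hab]; simp [mul_comm, hψu]⟩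
  have hinj : Set.InjOn g (lineSet u v) := by
    intro P hP Q hQ hPQ
    obtain ⟨a, b, hab, hφP, hψP⟩ := key P hP
    obtain ⟨a', b', hab', hφQ, hψQ⟩ := key Q hQ
    simp only [hg] at hPQ
    by_cases hb : ψ P.rep = 0 <;> by_cases hb' : ψ Q.rep = 0
    · have hbz : b = 0 := by
        rcases mul_eq_zero.mp (hψP ▸ hb) with h | h
        · exact h
        · exact absurd h hψv
      have hbz' : b' = 0 := by
        rcases mul_eq_zero.mp (hψQ ▸ hb') with h | h
        · exact h
        · exact absurd h hψv
      have ha0 : a ≠ 0 := fun h => P.rep_nonzero (by simp [hab, hbz, h])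
      have ha0' : a' ≠ 0 := fun h => Q.rep_nonzero (by simp [hab', hbz', h])
      rw [eq_mk_of_rep_smul P u hu0 a ha0 (by simp [hab, hbz]),
        eq_mk_of_rep_smul Q u hu0 a' ha0' (by simp [hab', hbz'])]
    · simp [hb, hb'] at hPQ
    · simp [hb, hb'] at hPQ
    · simp only [hb, hb', if_neg, reduceIte] at hPQ
      have hr := Option.some_injective _ hPQ
      have hbz : b ≠ 0 := fun h => hb (by rw [hψP, h, zero_mul])
      have hbz' : b' ≠ 0 := fun h => hb' (by rw [hψQ, h, zero_mul])
      have hrat : a * b' = a' * b := by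
        rw [hφP, hψP, hφQ, hψQ] at hr
        have hr2 := (div_eq_div_iff (mul_ne_zero hbz hψv) (mul_ne_zero hbz' hψv)).mp hr
        exact mul_right_cancel₀ (mul_ne_zero hφu hψv) (by linear_combination hr2)
      set z : Fin 4 → F := (a/b) • u + v with hz
      have hz0 : z ≠ 0 := by
        intro h
        apply hvu
        rw [Submodule.mem_span_singleton]
        refine ⟨-(a/b), ?_⟩
        have : v = -((a/b) • u) := by
          rw [eq_neg_iff_add_eq_zero, add_comm]; exact h
        rw [this, neg_smul]
      have hPz : P.rep = b • z := by
        rw [hz, smul_add, smul_smul, hab, mul_div_cancel₀ _ hbz]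
      have hQz : Q.rep = b' • z := by
        have : a'/b' = a/b := by field_simp; linear_combination -hrat
        rw [hz, smul_add, smul_smul, hab', ← this, mul_div_cancel₀ _ hbz']
      rw [eq_mk_of_rep_smul P z hz0 b hbz hPz, eq_mk_of_rep_smul Q z hz0 b' hbz' hQz]
  calc (lineSet u v).ncard ≤ (Set.univ : Set (Option F)).ncard :=
        Set.ncard_le_ncard_of_injOn g (fun a _ => Set.mem_univ _) hinj (Set.finite_univ)
    _ = Fintype.card F + 1 := by
        rw [Set.ncard_univ, Nat.card_eq_fintype_card, Fintype.card_option]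

end Geometry

/-- The set of points of the projective space `P^{n-1}(F)` at which a (homogeneous)
polynomial `f` in `n` variables vanishes. -/
def projZeros {F : Type*} [Field F] {n : ℕ} (f : MvPolynomial (Fin n) F) :
    Set (Projectivization F (Fin n → F)) :=
  {P | MvPolynomial.eval P.rep f = 0}

section Main

variable {F : Type*} [Field F] [Fintype F]

local notation "P3" => Projectivization F (Fin 4 → F)

lemma mem_S_iff (Fs : Fin 5 → MvPolynomial (Fin 4) F) (P : P3) :
    P ∈ (⋂ i, projZeros (Fs i)) ↔ ∀ i, MvPolynomial.eval P.rep (Fs i) = 0 := by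
  simp [projZeros, Set.mem_iInter, Set.mem_setOf_eq]

/-- 3-closure: a line meeting V in three points lies in V -/
lemma line_subset (Fs : Fin 5 → MvPolynomial (Fin 4) F) (hhom : ∀ i, (Fs i).IsHomogeneous 2)
    {P1 P2 P3' : P3} (h1 : P1 ∈ ⋂ i, projZeros (Fs i)) (h2 : P2 ∈ ⋂ i, projZeros (Fs i))
    (h3 : P3' ∈ ⋂ i, projZeros (Fs i)) (h12 : P1 ≠ P2) (h13 : P1 ≠ P3') (h23 : P2 ≠ P3')
    (hspan : P3'.rep ∈ Submodule.span F {P1.rep, P2.rep}) :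
    lineSet P1.rep P2.rep ⊆ ⋂ i, projZeros (Fs i) := by
  intro X hX
  rw [mem_S_iff]
  intro i
  rw [mem_S_iff] at h1 h2 h3
  obtain ⟨s, t, hst⟩ := Submodule.mem_span_pair.mp hX
  obtain ⟨a, b, hab⟩ := Submodule.mem_span_pair.mp hspan
  have ha : a ≠ 0 := by
    rintro rfl
    simp only [zero_smul, zero_add] at hab
    have hb : b ≠ 0 := by
      rintro rfl; exact P3'.rep_nonzero (by simp [← hab])
    exact h23 (((eq_mk_of_rep_smul P3' P2.rep P2.rep_nonzero b hb hab.symm).trans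
      (Projectivization.mk_rep P2)).symm)
  have hb : b ≠ 0 := by
    rintro rfl
    simp only [zero_smul, add_zero] at hab
    exact h13 (((eq_mk_of_rep_smul P3' P1.rep P1.rep_nonzero a ha hab.symm).trans
      (Projectivization.mk_rep P1)).symm)
  have hB : MvPolynomial.eval (P1.rep + P2.rep) (Fs i) = 0 := by
    have := polar (hhom i) P1.rep P2.rep a b
    rw [hab, h3 i, h1 i, h2 i] at this
    have h' : a * b * MvPolynomial.eval (P1.rep + P2.rep) (Fs i) = 0 := by
      linear_combination -this
    rcases mul_eq_zero.mp h' with h' | h'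
    · exact absurd h' (mul_ne_zero ha hb)
    · exact h'
  have := polar (hhom i) P1.rep P2.rep s t
  rw [hst] at this
  rw [this, h1 i, h2 i, hB]
  ring

/-- master: six points of V with "triangular" separating linear-form pairs give a contradiction -/
lemma six_points (Fs : Fin 5 → MvPolynomial (Fin 4) F)
    (hli : LinearIndependent F Fs) (hhom : ∀ i, (Fs i).IsHomogeneous 2)
    (P : Fin 6 → P3) (hP : ∀ j, P j ∈ ⋂ i, projZeros (Fs i))
    (φ ψ : Fin 6 → ((Fin 4 → F) →ₗ[F] F))
    (htri : ∀ i j, j < i → φ i (P j).rep = 0 ∨ ψ i (P j).rep = 0)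
    (hdiag : ∀ i, φ i (P i).rep ≠ 0 ∧ ψ i (P i).rep ≠ 0) : False := by
  apply main_contra Fs hli hhom (fun j => (P j).rep)
    (fun j i => (mem_S_iff Fs (P j)).mp (hP j) i)
    (fun i => linPoly (φ i) * linPoly (ψ i))
    (fun i => by simpa using (linPoly_hom (φ i)).mul (linPoly_hom (ψ i)))
  · intro i j hji
    rw [map_mul, eval_linPoly, eval_linPoly]
    rcases htri i j hji with h | h
    · rw [h, zero_mul]
    · rw [h, mul_zero]
  · intro i
    rw [map_mul, eval_linPoly, eval_linPoly]
    exact mul_ne_zero (hdiag i).1 (hdiag i).2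



/-- Configuration: three collinear points, two points off that line, a sixth point off both lines. -/
lemma configC (Fs : Fin 5 → MvPolynomial (Fin 4) F)
    (hli : LinearIndependent F Fs) (hhom : ∀ i, (Fs i).IsHomogeneous 2)
    (P1 P2 P3' P4 P5 P6 : P3)
    (h1 : P1 ∈ ⋂ i, projZeros (Fs i)) (h2 : P2 ∈ ⋂ i, projZeros (Fs i))
    (h3 : P3' ∈ ⋂ i, projZeros (Fs i)) (h4 : P4 ∈ ⋂ i, projZeros (Fs i))
    (h5 : P5 ∈ ⋂ i, projZeros (Fs i)) (h6 : P6 ∈ ⋂ i, projZeros (Fs i))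
    (h13 : P1 ≠ P3') (h23 : P2 ≠ P3')
    (h3span : P3'.rep ∈ Submodule.span F {P1.rep, P2.rep})
    (h4s : P4.rep ∉ Submodule.span F {P1.rep, P2.rep})
    (h5s : P5.rep ∉ Submodule.span F {P1.rep, P2.rep}) (h45 : P4 ≠ P5)
    (h6a : P6.rep ∉ Submodule.span F {P1.rep, P2.rep})
    (h6b : P6.rep ∉ Submodule.span F {P4.rep, P5.rep}) : False := by
  have h12 : P1 ≠ P2 := by
    rintro rfl
    exact rep_ne_rep h13 (by simpa using h3span)
  obtain ⟨φ1, hφ1k, hφ1⟩ := exists_funct (⊥ : Submodule F (Fin 4 → F)) P1.rep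
    (by simp [Submodule.mem_bot, P1.rep_nonzero])
  obtain ⟨φ2, hφ2k, hφ2⟩ := exists_funct (Submodule.span F {P1.rep}) P2.rep (rep_ne_rep h12)
  obtain ⟨φ3, hφ3k, hφ3⟩ := exists_funct (Submodule.span F {P1.rep}) P3'.rep (rep_ne_rep h13)
  obtain ⟨χ3, hχ3k, hχ3⟩ := exists_funct (Submodule.span F {P2.rep}) P3'.rep (rep_ne_rep h23)
  obtain ⟨φ4, hφ4k, hφ4⟩ := exists_funct (Submodule.span F {P1.rep, P2.rep}) P4.rep h4s
  obtain ⟨φ5, hφ5k, hφ5⟩ := exists_funct (Submodule.span F {P1.rep, P2.rep}) P5.rep h5s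
  obtain ⟨χ5, hχ5k, hχ5⟩ := exists_funct (Submodule.span F {P4.rep}) P5.rep (rep_ne_rep h45)
  obtain ⟨φ6, hφ6k, hφ6⟩ := exists_funct (Submodule.span F {P1.rep, P2.rep}) P6.rep h6a
  obtain ⟨χ6, hχ6k, hχ6⟩ := exists_funct (Submodule.span F {P4.rep, P5.rep}) P6.rep h6b
  have m1 : P1.rep ∈ Submodule.span F {P1.rep, P2.rep} := Submodule.subset_span (by simp)
  have m2 : P2.rep ∈ Submodule.span F {P1.rep, P2.rep} := Submodule.subset_span (by simp)
  have m4 : P4.rep ∈ Submodule.span F {P4.rep, P5.rep} := Submodule.subset_span (by simp)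
  have m5 : P5.rep ∈ Submodule.span F {P4.rep, P5.rep} := Submodule.subset_span (by simp)
  have s1 : P1.rep ∈ Submodule.span F ({P1.rep} : Set (Fin 4 → F)) :=
    Submodule.mem_span_singleton_self _
  have s2 : P2.rep ∈ Submodule.span F ({P2.rep} : Set (Fin 4 → F)) :=
    Submodule.mem_span_singleton_self _
  have s4 : P4.rep ∈ Submodule.span F ({P4.rep} : Set (Fin 4 → F)) :=
    Submodule.mem_span_singleton_self _
  apply six_points Fs hli hhom ![P1, P2, P3', P4, P5, P6]
    (fun j => by fin_cases j <;> assumption)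
    ![φ1, φ2, φ3, φ4, φ5, φ6] ![φ1, φ2, χ3, φ4, χ5, χ6]
  · intro i j hji
    fin_cases i <;> fin_cases j <;>
      first
        | exact absurd hji (by decide)
        | exact Or.inl (hφ2k _ s1)
        | exact Or.inl (hφ3k _ s1)
        | exact Or.inr (hχ3k _ s2)
        | exact Or.inl (hφ4k _ m1)
        | exact Or.inl (hφ4k _ m2)
        | exact Or.inl (hφ4k _ h3span)
        | exact Or.inl (hφ5k _ m1)
        | exact Or.inl (hφ5k _ m2)
        | exact Or.inl (hφ5k _ h3span)
        | exact Or.inr (hχ5k _ s4)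
        | exact Or.inl (hφ6k _ m1)
        | exact Or.inl (hφ6k _ m2)
        | exact Or.inl (hφ6k _ h3span)
        | exact Or.inr (hχ6k _ m4)
        | exact Or.inr (hχ6k _ m5)
  · intro i
    fin_cases i
    · exact ⟨hφ1, hφ1⟩
    · exact ⟨hφ2, hφ2⟩
    · exact ⟨hφ3, hχ3⟩
    · exact ⟨hφ4, hφ4⟩
    · exact ⟨hφ5, hχ5⟩
    · exact ⟨hφ6, hχ6⟩



/-- Configuration: six points in "general position" (cap case, non-planar). -/
lemma configCap (Fs : Fin 5 → MvPolynomial (Fin 4) F)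
    (hli : LinearIndependent F Fs) (hhom : ∀ i, (Fs i).IsHomogeneous 2)
    (P1 P2 P3' P4 P5 P6 : P3)
    (h1 : P1 ∈ ⋂ i, projZeros (Fs i)) (h2 : P2 ∈ ⋂ i, projZeros (Fs i))
    (h3 : P3' ∈ ⋂ i, projZeros (Fs i)) (h4 : P4 ∈ ⋂ i, projZeros (Fs i))
    (h5 : P5 ∈ ⋂ i, projZeros (Fs i)) (h6 : P6 ∈ ⋂ i, projZeros (Fs i))
    (h12 : P1 ≠ P2) (h34 : P3' ≠ P4)
    (h3s : P3'.rep ∉ Submodule.span F {P1.rep, P2.rep})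
    (h4s : P4.rep ∉ Submodule.span F {P1.rep, P2.rep})
    (h5s : P5.rep ∉ Submodule.span F {P1.rep, P2.rep})
    (h5t : P5.rep ∉ Submodule.span F {P3'.rep, P4.rep})
    (h6s : P6.rep ∉ Submodule.span F {P1.rep, P2.rep, P3'.rep})
    (h6t : P6.rep ∉ Submodule.span F {P4.rep, P5.rep}) : False := by
  obtain ⟨φ1, hφ1k, hφ1⟩ := exists_funct (⊥ : Submodule F (Fin 4 → F)) P1.rep
    (by simp [Submodule.mem_bot, P1.rep_nonzero])
  obtain ⟨φ2, hφ2k, hφ2⟩ := exists_funct (Submodule.span F {P1.rep}) P2.rep (rep_ne_rep h12)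
  obtain ⟨φ3, hφ3k, hφ3⟩ := exists_funct (Submodule.span F {P1.rep, P2.rep}) P3'.rep h3s
  obtain ⟨φ4, hφ4k, hφ4⟩ := exists_funct (Submodule.span F {P1.rep, P2.rep}) P4.rep h4s
  obtain ⟨χ4, hχ4k, hχ4⟩ := exists_funct (Submodule.span F {P3'.rep}) P4.rep (rep_ne_rep h34)
  obtain ⟨φ5, hφ5k, hφ5⟩ := exists_funct (Submodule.span F {P1.rep, P2.rep}) P5.rep h5s
  obtain ⟨χ5, hχ5k, hχ5⟩ := exists_funct (Submodule.span F {P3'.rep, P4.rep}) P5.rep h5t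
  obtain ⟨φ6, hφ6k, hφ6⟩ := exists_funct (Submodule.span F {P1.rep, P2.rep, P3'.rep}) P6.rep h6s
  obtain ⟨χ6, hχ6k, hχ6⟩ := exists_funct (Submodule.span F {P4.rep, P5.rep}) P6.rep h6t
  have m1 : P1.rep ∈ Submodule.span F {P1.rep, P2.rep} := Submodule.subset_span (by simp)
  have m2 : P2.rep ∈ Submodule.span F {P1.rep, P2.rep} := Submodule.subset_span (by simp)
  have s1 : P1.rep ∈ Submodule.span F ({P1.rep} : Set (Fin 4 → F)) :=
    Submodule.mem_span_singleton_self _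
  have s3 : P3'.rep ∈ Submodule.span F ({P3'.rep} : Set (Fin 4 → F)) :=
    Submodule.mem_span_singleton_self _
  have m3a : P3'.rep ∈ Submodule.span F {P3'.rep, P4.rep} := Submodule.subset_span (by simp)
  have m4a : P4.rep ∈ Submodule.span F {P3'.rep, P4.rep} := Submodule.subset_span (by simp)
  have t1 : P1.rep ∈ Submodule.span F {P1.rep, P2.rep, P3'.rep} := Submodule.subset_span (by simp)
  have t2 : P2.rep ∈ Submodule.span F {P1.rep, P2.rep, P3'.rep} := Submodule.subset_span (by simp)
  have t3 : P3'.rep ∈ Submodule.span F {P1.rep, P2.rep, P3'.rep} :=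
    Submodule.subset_span (by simp)
  have m4 : P4.rep ∈ Submodule.span F {P4.rep, P5.rep} := Submodule.subset_span (by simp)
  have m5 : P5.rep ∈ Submodule.span F {P4.rep, P5.rep} := Submodule.subset_span (by simp)
  apply six_points Fs hli hhom ![P1, P2, P3', P4, P5, P6]
    (fun j => by fin_cases j <;> assumption)
    ![φ1, φ2, φ3, φ4, φ5, φ6] ![φ1, φ2, φ3, χ4, χ5, χ6]
  · intro i j hji
    fin_cases i <;> fin_cases j <;>
      first
        | exact absurd hji (by decide)
        | exact Or.inl (hφ2k _ s1)
        | exact Or.inl (hφ3k _ m1)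
        | exact Or.inl (hφ3k _ m2)
        | exact Or.inl (hφ4k _ m1)
        | exact Or.inl (hφ4k _ m2)
        | exact Or.inr (hχ4k _ s3)
        | exact Or.inl (hφ5k _ m1)
        | exact Or.inl (hφ5k _ m2)
        | exact Or.inr (hχ5k _ m3a)
        | exact Or.inr (hχ5k _ m4a)
        | exact Or.inl (hφ6k _ t1)
        | exact Or.inl (hφ6k _ t2)
        | exact Or.inl (hφ6k _ t3)
        | exact Or.inr (hχ6k _ m4)
        | exact Or.inr (hχ6k _ m5)
  · intro i
    fin_cases i
    · exact ⟨hφ1, hφ1⟩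
    · exact ⟨hφ2, hφ2⟩
    · exact ⟨hφ3, hφ3⟩
    · exact ⟨hφ4, hχ4⟩
    · exact ⟨hφ5, hχ5⟩
    · exact ⟨hφ6, hχ6⟩

set_option maxHeartbeats 2000000 in
/-- Configuration: two disjoint (skew) lines contained in V. -/
lemma configD (Fs : Fin 5 → MvPolynomial (Fin 4) F)
    (hli : LinearIndependent F Fs) (hhom : ∀ i, (Fs i).IsHomogeneous 2)
    (A1 A2 B1 B2 : P3)
    (hA : lineSet A1.rep A2.rep ⊆ ⋂ i, projZeros (Fs i))
    (hB : lineSet B1.rep B2.rep ⊆ ⋂ i, projZeros (Fs i))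
    (h12 : A1 ≠ A2) (h45 : B1 ≠ B2)
    (hAB : ∀ x : Fin 4 → F, x ∈ Submodule.span F {A1.rep, A2.rep} →
      x ∈ Submodule.span F {B1.rep, B2.rep} → x = 0) : False := by
  have m1 : A1.rep ∈ Submodule.span F {A1.rep, A2.rep} := Submodule.subset_span (by simp)
  have m2 : A2.rep ∈ Submodule.span F {A1.rep, A2.rep} := Submodule.subset_span (by simp)
  have m4 : B1.rep ∈ Submodule.span F {B1.rep, B2.rep} := Submodule.subset_span (by simp)
  have m5 : B2.rep ∈ Submodule.span F {B1.rep, B2.rep} := Submodule.subset_span (by simp)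
  -- the third points on each line
  have hp12 : A1.rep + A2.rep ≠ 0 := by
    intro h
    apply rep_ne_rep h12
    rw [Submodule.mem_span_singleton]
    exact ⟨-1, by rw [neg_one_smul]; linear_combination (norm := module) -h⟩
  have hq12 : B1.rep + B2.rep ≠ 0 := by
    intro h
    apply rep_ne_rep h45
    rw [Submodule.mem_span_singleton]
    exact ⟨-1, by rw [neg_one_smul]; linear_combination (norm := module) -h⟩
  set A3 : P3 := Projectivization.mk F (A1.rep + A2.rep) hp12 with hA3
  set B3 : P3 := Projectivization.mk F (B1.rep + B2.rep) hq12 with hB3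
  have hA3line : A3 ∈ lineSet A1.rep A2.rep := mem_lineSet_mk _ _ _ hp12 (Submodule.add_mem _ m1 m2)
  have hB3line : B3 ∈ lineSet B1.rep B2.rep := mem_lineSet_mk _ _ _ hq12 (Submodule.add_mem _ m4 m5)
  obtain ⟨c3, hc3, hrep3⟩ := rep_spec (A1.rep + A2.rep) hp12
  obtain ⟨c6, hc6, hrep6⟩ := rep_spec (B1.rep + B2.rep) hq12
  -- span non-memberships
  have nB1 : B1.rep ∉ Submodule.span F {A1.rep, A2.rep} :=
    fun h => B1.rep_nonzero (hAB _ h m4)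
  have nB2T : B2.rep ∉ Submodule.span F {A1.rep, A2.rep, B1.rep} := by
    intro h
    obtain ⟨α, β, γ, hh⟩ := mem_span_triple.mp h
    have hmem : B2.rep - γ • B1.rep ∈ Submodule.span F {A1.rep, A2.rep} := by
      rw [← hh]
      refine Submodule.mem_span_pair.mpr ⟨α, β, by abel⟩
    have hmem2 : B2.rep - γ • B1.rep ∈ Submodule.span F {B1.rep, B2.rep} :=
      Submodule.sub_mem _ m5 (Submodule.smul_mem _ _ m4)
    have := hAB _ hmem hmem2
    apply rep_ne_rep h45
    rw [Submodule.mem_span_singleton]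
    exact ⟨γ, by linear_combination (norm := module) -this⟩
  have nB1T : B1.rep ∉ Submodule.span F {A1.rep, A2.rep, B2.rep} := by
    intro h
    obtain ⟨α, β, γ, hh⟩ := mem_span_triple.mp h
    have hmem : B1.rep - γ • B2.rep ∈ Submodule.span F {A1.rep, A2.rep} := by
      rw [← hh]
      refine Submodule.mem_span_pair.mpr ⟨α, β, by abel⟩
    have hmem2 : B1.rep - γ • B2.rep ∈ Submodule.span F {B1.rep, B2.rep} :=
      Submodule.sub_mem _ m4 (Submodule.smul_mem _ _ m5)
    have := hAB _ hmem hmem2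
    apply rep_ne_rep h45.symm
    rw [Submodule.mem_span_singleton]
    exact ⟨γ, by linear_combination (norm := module) -this⟩
  -- functionals
  obtain ⟨φa, hφak, hφa⟩ := exists_funct (⊥ : Submodule F (Fin 4 → F)) A1.rep
    (by simp [Submodule.mem_bot, A1.rep_nonzero])
  obtain ⟨φb, hφbk, hφb⟩ := exists_funct (Submodule.span F {A1.rep}) A2.rep (rep_ne_rep h12)
  obtain ⟨φc, hφck, hφc⟩ := exists_funct (Submodule.span F {A2.rep}) A1.rep (rep_ne_rep h12.symm)
  obtain ⟨φd, hφdk, hφd⟩ := exists_funct (Submodule.span F {A1.rep, A2.rep}) B1.rep nB1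
  obtain ⟨φe, hφek, hφe⟩ := exists_funct (Submodule.span F {A1.rep, A2.rep, B1.rep}) B2.rep nB2T
  obtain ⟨φf, hφfk, hφf⟩ := exists_funct (Submodule.span F {A1.rep, A2.rep, B2.rep}) B1.rep nB1T
  have s1 : A1.rep ∈ Submodule.span F ({A1.rep} : Set (Fin 4 → F)) :=
    Submodule.mem_span_singleton_self _
  have s2 : A2.rep ∈ Submodule.span F ({A2.rep} : Set (Fin 4 → F)) :=
    Submodule.mem_span_singleton_self _
  have hA3span : A3.rep ∈ Submodule.span F {A1.rep, A2.rep} := hA3line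
  have t1 : A1.rep ∈ Submodule.span F {A1.rep, A2.rep, B1.rep} := Submodule.subset_span (by simp)
  have t2 : A2.rep ∈ Submodule.span F {A1.rep, A2.rep, B1.rep} := Submodule.subset_span (by simp)
  have t4 : B1.rep ∈ Submodule.span F {A1.rep, A2.rep, B1.rep} := Submodule.subset_span (by simp)
  have u1 : A1.rep ∈ Submodule.span F {A1.rep, A2.rep, B2.rep} := Submodule.subset_span (by simp)
  have u2 : A2.rep ∈ Submodule.span F {A1.rep, A2.rep, B2.rep} := Submodule.subset_span (by simp)
  have u5 : B2.rep ∈ Submodule.span F {A1.rep, A2.rep, B2.rep} := Submodule.subset_span (by simp)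
  have hpairT : Submodule.span F {A1.rep, A2.rep} ≤ Submodule.span F {A1.rep, A2.rep, B1.rep} :=
    Submodule.span_mono (by intro x hx; simp at hx ⊢; tauto)
  have hpairU : Submodule.span F {A1.rep, A2.rep} ≤ Submodule.span F {A1.rep, A2.rep, B2.rep} :=
    Submodule.span_mono (by intro x hx; simp at hx ⊢; tauto)
  -- evaluations at the "sum" points
  have eA3 : ∀ (φ : (Fin 4 → F) →ₗ[F] F), φ A3.rep = c3 * (φ A1.rep + φ A2.rep) := by
    intro φ
    rw [hrep3, map_smul, map_add, smul_eq_mul]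
  have eB3 : ∀ (φ : (Fin 4 → F) →ₗ[F] F), φ B3.rep = c6 * (φ B1.rep + φ B2.rep) := by
    intro φ
    rw [hrep6, map_smul, map_add, smul_eq_mul]
  apply six_points Fs hli hhom ![A1, A2, A3, B1, B2, B3]
    (fun j => by
      fin_cases j
      · exact hA (by exact m1)
      · exact hA (by exact m2)
      · exact hA hA3line
      · exact hB (by exact m4)
      · exact hB (by exact m5)
      · exact hB hB3line)
    ![φa, φb, φb, φd, φe, φf] ![φa, φb, φc, φd, φe, φe]
  · intro i j hji
    fin_cases i <;> fin_cases j <;>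
      first
        | exact absurd hji (by decide)
        | exact Or.inl (hφbk _ s1)
        | exact Or.inr (hφck _ s2)
        | exact Or.inl (hφdk _ m1)
        | exact Or.inl (hφdk _ m2)
        | exact Or.inl (hφdk _ hA3span)
        | exact Or.inl (hφek _ t1)
        | exact Or.inl (hφek _ t2)
        | exact Or.inl (hφek _ (hpairT hA3span))
        | exact Or.inl (hφek _ t4)
        | exact Or.inl (hφfk _ u1)
        | exact Or.inl (hφfk _ u2)
        | exact Or.inl (hφfk _ (hpairU hA3span))
        | exact Or.inr (hφek _ t4)
        | exact Or.inl (hφfk _ u5)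
  · intro i
    fin_cases i
    · exact ⟨hφa, hφa⟩
    · exact ⟨hφb, hφb⟩
    · constructor
      · show φb A3.rep ≠ 0
        rw [eA3, hφbk _ s1, zero_add]
        exact mul_ne_zero hc3 hφb
      · show φc A3.rep ≠ 0
        rw [eA3, hφck _ s2, add_zero]
        exact mul_ne_zero hc3 hφc
    · exact ⟨hφd, hφd⟩
    · exact ⟨hφe, hφe⟩
    · constructor
      · show φf B3.rep ≠ 0
        rw [eB3, hφfk _ u5, add_zero]
        exact mul_ne_zero hc6 hφf
      · show φe B3.rep ≠ 0
        rw [eB3, hφek _ t4, zero_add]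
        exact mul_ne_zero hc6 hφe



/-- A planar cap has at most q+2 points. -/
lemma cap_planar_ncard (S : Set P3)
    (hcap : ∀ P Q R : P3, P ∈ S → Q ∈ S → R ∈ S → P ≠ Q → P ≠ R → Q ≠ R →
      R.rep ∉ Submodule.span F {P.rep, Q.rep})
    (φ0 : (Fin 4 → F) →ₗ[F] F) (w0 : Fin 4 → F) (hw0 : φ0 w0 ≠ 0)
    (hS : ∀ P ∈ S, φ0 P.rep = 0)
    (P1 P2 P3' : P3) (hP1 : P1 ∈ S) (hP2 : P2 ∈ S) (hP3 : P3' ∈ S)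
    (h12 : P1 ≠ P2) (h13 : P1 ≠ P3') (h23 : P2 ≠ P3') :
    S.ncard ≤ Fintype.card F + 2 := by
  classical
  -- the kernel of φ0 is the span of the three representatives
  have i1 : LinearIndependent F ![P3'.rep] :=
    LinearIndependent.of_subsingleton (0 : Fin 1) P3'.rep_nonzero
  have i2 : LinearIndependent F ![P2.rep, P3'.rep] := by
    rw [show (![P2.rep, P3'.rep] : Fin 2 → (Fin 4 → F)) = Fin.cons P2.rep ![P3'.rep] from rfl,
      linearIndependent_fin_cons]
    refine ⟨i1, ?_⟩
    have : Set.range ![P3'.rep] = {P3'.rep} := by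
      ext x; simp [Fin.exists_fin_one]
    rw [this]
    exact rep_ne_rep h23.symm
  have i3 : LinearIndependent F ![P1.rep, P2.rep, P3'.rep] := by
    rw [show (![P1.rep, P2.rep, P3'.rep] : Fin 3 → (Fin 4 → F))
        = Fin.cons P1.rep ![P2.rep, P3'.rep] from rfl, linearIndependent_fin_cons]
    refine ⟨i2, ?_⟩
    have : Set.range ![P2.rep, P3'.rep] = {P2.rep, P3'.rep} := by
      ext x; constructor
      · rintro ⟨i, rfl⟩; fin_cases i <;> simp
      · rintro (rfl | rfl)
        · exact ⟨0, rfl⟩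
        · exact ⟨1, rfl⟩
    rw [this]
    exact hcap P2 P3' P1 hP2 hP3 hP1 h23 h12.symm h13.symm
  have hrange : Set.range ![P1.rep, P2.rep, P3'.rep] = {P1.rep, P2.rep, P3'.rep} := by
    ext x; constructor
    · rintro ⟨i, rfl⟩; fin_cases i <;> simp
    · rintro (rfl | rfl | rfl)
      · exact ⟨0, rfl⟩
      · exact ⟨1, rfl⟩
      · exact ⟨2, rfl⟩
  have hkerspan : Submodule.span F {P1.rep, P2.rep, P3'.rep} = LinearMap.ker φ0 := by
    apply Submodule.eq_of_le_of_finrank_le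
    · rw [Submodule.span_le]
      rintro x (rfl | rfl | rfl) <;>
        simp only [SetLike.mem_coe, LinearMap.mem_ker]
      · exact hS _ hP1
      · exact hS _ hP2
      · exact hS _ hP3
    · have hsurj : Function.Surjective φ0 := by
        intro c
        exact ⟨(c / φ0 w0) • w0, by rw [map_smul, smul_eq_mul, div_mul_cancel₀ _ hw0]⟩
      have h1 : Module.finrank F (LinearMap.range φ0) = 1 := by
        rw [LinearMap.range_eq_top.mpr hsurj]
        simpa using Module.finrank_self F
      have h2 := LinearMap.finrank_range_add_finrank_ker φ0
      rw [Module.finrank_fin_fun, h1] at h2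
      have h3 : Module.finrank F (Submodule.span F {P1.rep, P2.rep, P3'.rep}) = 3 := by
        rw [← hrange, finrank_span_eq_card i3, Fintype.card_fin]
      omega
  obtain ⟨β, hβk, hβ⟩ := exists_funct (Submodule.span F {P1.rep, P3'.rep}) P2.rep
    (hcap P1 P3' P2 hP1 hP3 hP2 h13 h12 h23.symm)
  obtain ⟨γ, hγk, hγ⟩ := exists_funct (Submodule.span F {P1.rep, P2.rep}) P3'.rep
    (hcap P1 P2 P3' hP1 hP2 hP3 h12 h13 h23)
  have hβ1 : β P1.rep = 0 := hβk _ (Submodule.subset_span (by simp))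
  have hβ3 : β P3'.rep = 0 := hβk _ (Submodule.subset_span (by simp))
  have hγ1 : γ P1.rep = 0 := hγk _ (Submodule.subset_span (by simp))
  have hγ2 : γ P2.rep = 0 := hγk _ (Submodule.subset_span (by simp))
  set g : P3 → Option F := fun Q => if β Q.rep = 0 then none else some (γ Q.rep / β Q.rep)
    with hg
  have hdec : ∀ Q ∈ S, ∃ a b c : F, a • P1.rep + b • P2.rep + c • P3'.rep = Q.rep ∧
      β Q.rep = b * β P2.rep ∧ γ Q.rep = c * γ P3'.rep := by
    intro Q hQ
    have : Q.rep ∈ Submodule.span F {P1.rep, P2.rep, P3'.rep} := by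
      rw [hkerspan]; exact hS _ hQ
    obtain ⟨a, b, c, habc⟩ := mem_span_triple.mp this
    refine ⟨a, b, c, habc, ?_, ?_⟩
    · rw [← habc]; simp [hβ1, hβ3, mul_comm]
    · rw [← habc]; simp [hγ1, hγ2, mul_comm]
  have hinj : Set.InjOn g (S \ {P1}) := by
    intro Q hQ Q' hQ' heq
    obtain ⟨a, b, c, habc, hbQ, hcQ⟩ := hdec Q hQ.1
    obtain ⟨a', b', c', habc', hbQ', hcQ'⟩ := hdec Q' hQ'.1
    have hQP1 : Q ≠ P1 := by simpa using hQ.2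
    have hQ'P1 : Q' ≠ P1 := by simpa using hQ'.2
    by_contra hne
    have hmem : Q'.rep ∉ Submodule.span F {P1.rep, Q.rep} :=
      hcap P1 Q Q' hP1 hQ.1 hQ'.1 hQP1.symm hQ'P1.symm hne
    apply hmem
    simp only [hg] at heq
    by_cases hb : β Q.rep = 0 <;> by_cases hb' : β Q'.rep = 0
    · -- both none : b = b' = 0, c, c' ≠ 0
      have hbz : b = 0 := by
        rcases mul_eq_zero.mp (hbQ ▸ hb) with h | h
        · exact h
        · exact absurd h hβ
      have hbz' : b' = 0 := by
        rcases mul_eq_zero.mp (hbQ' ▸ hb') with h | h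
        · exact h
        · exact absurd h hβ
      have hcz : c ≠ 0 := by
        rintro rfl
        apply hQP1
        have ha : a ≠ 0 := by
          rintro rfl
          exact Q.rep_nonzero (by rw [← habc, hbz]; simp)
        exact (eq_mk_of_rep_smul Q P1.rep P1.rep_nonzero a ha
          (by rw [← habc, hbz]; simp)).trans (Projectivization.mk_rep P1)
      have hcz' : c' ≠ 0 := by
        rintro rfl
        apply hQ'P1
        have ha' : a' ≠ 0 := by
          rintro rfl
          exact Q'.rep_nonzero (by rw [← habc', hbz']; simp)
        exact (eq_mk_of_rep_smul Q' P1.rep P1.rep_nonzero a' ha'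
          (by rw [← habc', hbz']; simp)).trans (Projectivization.mk_rep P1)
      refine Submodule.mem_span_pair.mpr ⟨a' - c' * a / c, c' / c, ?_⟩
      rw [← habc, ← habc', hbz, hbz']
      match_scalars
      · field_simp
        ring
      · ring
      · field_simp
    · simp [hb, hb'] at heq
    · simp [hb, hb'] at heq
    · -- both some
      simp only [hb, hb', if_neg, reduceIte] at heq
      have hr := Option.some_injective _ heq
      have hbz : b ≠ 0 := fun h => hb (by rw [hbQ, h, zero_mul])
      have hbz' : b' ≠ 0 := fun h => hb' (by rw [hbQ', h, zero_mul])
      have hrat : c * b' = c' * b := by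
        rw [hbQ, hbQ', hcQ, hcQ'] at hr
        have hr2 := (div_eq_div_iff (mul_ne_zero hbz hβ) (mul_ne_zero hbz' hβ)).mp hr
        exact mul_right_cancel₀ (mul_ne_zero hγ hβ) (by linear_combination hr2)
      refine Submodule.mem_span_pair.mpr ⟨a' - a * b' / b, b' / b, ?_⟩
      rw [← habc, ← habc']
      match_scalars
      · field_simp
        try ring
      · field_simp
        try ring
      · field_simp
        try linear_combination hrat
  have hcard1 : (S \ {P1}).ncard ≤ Fintype.card F + 1 := by
    calc (S \ {P1}).ncard ≤ (Set.univ : Set (Option F)).ncard :=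
          Set.ncard_le_ncard_of_injOn g (fun a _ => Set.mem_univ _) hinj (Set.finite_univ)
      _ = Fintype.card F + 1 := by
          rw [Set.ncard_univ, Nat.card_eq_fintype_card, Fintype.card_option]
  have hsub : S ⊆ (S \ {P1}) ∪ {P1} := by
    intro x hx
    by_cases hx1 : x = P1
    · exact Or.inr (by simp [hx1])
    · exact Or.inl ⟨hx, by simp [hx1]⟩
  have hfinS : ((S \ {P1}) ∪ {P1} : Set P3).Finite := by
    apply Set.Finite.union ?_ (Set.finite_singleton _)
    apply Set.Finite.diff
    apply Set.Finite.subset (Set.finite_range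
      (fun v : {v : Fin 4 → F // v ≠ 0} => Projectivization.mk F v.1 v.2))
    intro P _
    exact ⟨⟨P.rep, P.rep_nonzero⟩, Projectivization.mk_rep P⟩
  calc S.ncard ≤ ((S \ {P1}) ∪ {P1}).ncard := Set.ncard_le_ncard hsub hfinS
    _ ≤ (S \ {P1}).ncard + ({P1} : Set P3).ncard := Set.ncard_union_le _ _
    _ ≤ Fintype.card F + 1 + 1 := by
        have : ({P1} : Set P3).ncard = 1 := Set.ncard_singleton _
        omega
    _ = Fintype.card F + 2 := by omega


lemma projSet_finite (T : Set P3) : T.Finite := by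
  apply Set.Finite.subset (Set.finite_range
    (fun v : {v : Fin 4 → F // v ≠ 0} => Projectivization.mk F v.1 v.2))
  intro P _
  exact ⟨⟨P.rep, P.rep_nonzero⟩, Projectivization.mk_rep P⟩

lemma ncard_diff_ge (T R : Set P3) (hfinR : R.Finite) :
    T.ncard - R.ncard ≤ (T \ R).ncard := by
  have hsub : T ⊆ (T \ R) ∪ R := by
    intro x hx
    by_cases hxR : x ∈ R
    · exact Or.inr hxR
    · exact Or.inl ⟨hx, hxR⟩
  have h1 : T.ncard ≤ ((T \ R) ∪ R).ncard :=
    Set.ncard_le_ncard hsub ((projSet_finite _).union hfinR)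
  have h2 := Set.ncard_union_le (T \ R) R
  omega

lemma exists_three (T : Set P3) (h : 3 ≤ T.ncard) :
    ∃ a b c : P3, a ∈ T ∧ b ∈ T ∧ c ∈ T ∧ a ≠ b ∧ a ≠ c ∧ b ≠ c := by
  obtain ⟨a, ha, b, hb, hab⟩ := (Set.one_lt_ncard (projSet_finite T)).mp (by omega)
  have hpair : ({a, b} : Set P3).ncard ≤ 2 := by
    calc ({a, b} : Set P3).ncard ≤ ({a} : Set P3).ncard + ({b} : Set P3).ncard := by
          rw [show ({a, b} : Set P3) = {a} ∪ {b} from rfl]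
          exact Set.ncard_union_le _ _
      _ ≤ 2 := by rw [Set.ncard_singleton, Set.ncard_singleton]
  have h3 : 1 ≤ (T \ {a, b}).ncard := by
    have := ncard_diff_ge T {a, b} (Set.toFinite _)
    omega
  have hne : (T \ {a, b}).Nonempty :=
    Set.nonempty_of_ncard_ne_zero (s := T \ {a, b}) (by omega)
  obtain ⟨c, hc⟩ := hne
  refine ⟨a, b, c, ha, hb, hc.1, hab, ?_, ?_⟩
  · rintro rfl; exact hc.2 (by simp)
  · rintro rfl; exact hc.2 (by simp)

end Main




/-- If `F_1, ..., F_5` are five linearly independent homogeneous polynomials of degree `2`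
in `F_q[x_0, x_1, x_2, x_3]`, then `|V(F_1, ..., F_5)| ≤ 1 + 2q`, which is strictly
smaller than the Tsfasman–Boguslavsky bound `T_5 = 2(1 + q)`. -/
theorem stmt_13 {F : Type*} [Field F] [Fintype F] (q : ℕ) (hq : q = Fintype.card F)
    (Fs : Fin 5 → MvPolynomial (Fin 4) F)
    (hli : LinearIndependent F Fs) (hhom : ∀ i, (Fs i).IsHomogeneous 2) :
    (⋂ i, projZeros (Fs i)).ncard ≤ 1 + 2 * q ∧ 1 + 2 * q < 2 * (1 + q) := by
  constructor
  swap
  · omega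
  by_contra hbig
  push_neg at hbig
  set V : Set (Projectivization F (Fin 4 → F)) := ⋂ i, projZeros (Fs i) with hV
  have hn : 2 * q + 2 ≤ V.ncard := by omega
  have hq2 : 2 ≤ q := by
    rw [hq]; exact Fintype.one_lt_card
  have hfin : V.Finite := projSet_finite V
  obtain ⟨P1, P2, P3', hP1, hP2, hP3, h12, h13, h23⟩ := exists_three V (by omega)
  by_cases hcol : ∃ A B C : Projectivization F (Fin 4 → F), A ∈ V ∧ B ∈ V ∧ C ∈ V ∧
      A ≠ B ∧ A ≠ C ∧ B ≠ C ∧ C.rep ∈ Submodule.span F {A.rep, B.rep}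
  · -- there exist three collinear points: the line is inside V
    obtain ⟨A, B, C, hA, hB, hC, hAB, hAC, hBC, hCspan⟩ := hcol
    have hline : lineSet A.rep B.rep ⊆ V := line_subset Fs hhom hA hB hC hAB hAC hBC hCspan
    set L : Set (Projectivization F (Fin 4 → F)) := lineSet A.rep B.rep with hL
    have hLcard : L.ncard ≤ q + 1 := by
      rw [hq]
      exact lineSet_ncard _ _ (rep_ne_rep hAB.symm) (rep_ne_rep hAB)
    have hVL : 3 ≤ (V \ L).ncard := by
      have := ncard_diff_ge V L (projSet_finite L)
      omega
    obtain ⟨P4, P5, R, hP4, hP5, hR, h45, h4R, h5R⟩ := exists_three (V \ L) hVL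
    by_cases hout : ∃ P6 ∈ V, P6 ∉ L ∧ P6.rep ∉ Submodule.span F {P4.rep, P5.rep}
    · obtain ⟨P6, hP6, hP6L, hP6M⟩ := hout
      exact configC Fs hli hhom A B C P4 P5 P6 hA hB hC hP4.1 hP5.1 hP6
        hAC hBC hCspan hP4.2 hP5.2 h45 hP6L hP6M
    · push_neg at hout
      set M : Set (Projectivization F (Fin 4 → F)) := lineSet P4.rep P5.rep with hM
      have hRM : R.rep ∈ Submodule.span F {P4.rep, P5.rep} := hout R hR.1 hR.2
      have hlineM : M ⊆ V := line_subset Fs hhom hP4.1 hP5.1 hR.1 h45 h4R h5R hRM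
      have hMcard : M.ncard ≤ q + 1 := by
        rw [hq]
        exact lineSet_ncard _ _ (rep_ne_rep h45.symm) (rep_ne_rep h45)
      by_cases hmeet : ∃ X, X ∈ L ∧ X ∈ M
      · obtain ⟨X, hXL, hXM⟩ := hmeet
        have hsub : V ⊆ L ∪ (M \ {X}) := by
          intro Y hY
          by_cases hYL : Y ∈ L
          · exact Or.inl hYL
          · refine Or.inr ⟨hout Y hY hYL, ?_⟩
            rintro rfl
            exact hYL hXL
        have hcount : V.ncard ≤ (q + 1) + q := by
          calc V.ncard ≤ (L ∪ (M \ {X})).ncard :=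
                Set.ncard_le_ncard hsub ((projSet_finite _).union (projSet_finite _))
            _ ≤ L.ncard + (M \ {X}).ncard := Set.ncard_union_le _ _
            _ ≤ (q + 1) + q := by
                have hX : (M \ {X}).ncard = M.ncard - 1 :=
                  Set.ncard_diff_singleton_of_mem hXM
                have hM1 : 1 ≤ M.ncard := by
                  have : ({X} : Set (Projectivization F (Fin 4 → F))).ncard ≤ M.ncard :=
                    Set.ncard_le_ncard (by simpa using hXM) (projSet_finite M)
                  simpa using this
                omega
        omega
      · push_neg at hmeet
        apply configD Fs hli hhom A B P4 P5 hline hlineM hAB h45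
        intro x hx1 hx2
        by_contra hx0
        exact hmeet (Projectivization.mk F x hx0)
          (mem_lineSet_mk _ _ _ hx0 hx1) (mem_lineSet_mk _ _ _ hx0 hx2)
  · -- no three collinear points : V is a cap
    push_neg at hcol
    have hcap : ∀ P Q R : Projectivization F (Fin 4 → F), P ∈ V → Q ∈ V → R ∈ V →
        P ≠ Q → P ≠ R → Q ≠ R → R.rep ∉ Submodule.span F {P.rep, Q.rep} := by
      intro P Q R hP hQ hR h1 h2 h3
      exact hcol P Q R hP hQ hR h1 h2 h3
    by_cases hplanar : ∃ φ0 : (Fin 4 → F) →ₗ[F] F,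
        (∃ w, φ0 w ≠ 0) ∧ ∀ P ∈ V, φ0 P.rep = 0
    · obtain ⟨φ0, ⟨w0, hw0⟩, hvan⟩ := hplanar
      have := cap_planar_ncard V hcap φ0 w0 hw0 hvan P1 P2 P3' hP1 hP2 hP3 h12 h13 h23
      omega
    · push_neg at hplanar
      -- find a point outside the plane of P1 P2 P3'
      have hUrank : Module.finrank F
          (Submodule.span F {P1.rep, P2.rep, P3'.rep}) ≤ 3 := by
        have h1 : Submodule.span F (Set.range ![P1.rep, P2.rep, P3'.rep])
            = Submodule.span F {P1.rep, P2.rep, P3'.rep} := by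
          congr 1
          ext x; constructor
          · rintro ⟨i, rfl⟩; fin_cases i <;> simp
          · rintro (rfl | rfl | rfl)
            · exact ⟨0, rfl⟩
            · exact ⟨1, rfl⟩
            · exact ⟨2, rfl⟩
        have := finrank_range_le_card ![P1.rep, P2.rep, P3'.rep] (R := F)
        rw [Set.finrank, h1] at this
        simpa using this
      have hw : ∃ w, w ∉ Submodule.span F {P1.rep, P2.rep, P3'.rep} := by
        by_contra hall
        push_neg at hall
        have htop : Submodule.span F {P1.rep, P2.rep, P3'.rep} = ⊤ :=
          Submodule.eq_top_iff'.mpr hall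
        rw [htop] at hUrank
        rw [finrank_top, Module.finrank_fin_fun] at hUrank
        omega
      obtain ⟨w, hwU⟩ := hw
      obtain ⟨φ6, hφ6k, hφ6⟩ := exists_funct (Submodule.span F {P1.rep, P2.rep, P3'.rep}) w hwU
      obtain ⟨P6, hP6, hP6ne⟩ := hplanar φ6 ⟨w, hφ6⟩
      have h6s : P6.rep ∉ Submodule.span F {P1.rep, P2.rep, P3'.rep} :=
        fun h => hP6ne (hφ6k _ h)
      have h16 : P1 ≠ P6 := by
        rintro rfl
        exact hP6ne (hφ6k _ (Submodule.subset_span (by simp)))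
      have h26 : P2 ≠ P6 := by
        rintro rfl
        exact hP6ne (hφ6k _ (Submodule.subset_span (by simp)))
      have h36 : P3' ≠ P6 := by
        rintro rfl
        exact hP6ne (hφ6k _ (Submodule.subset_span (by simp)))
      -- pick two further points
      have hrest : 2 ≤ (V \ {P1, P2, P3', P6}).ncard := by
        have hfin4 : ({P1, P2, P3', P6} : Set (Projectivization F (Fin 4 → F))).Finite :=
          Set.toFinite _
        have hle4 : ({P1, P2, P3', P6} : Set (Projectivization F (Fin 4 → F))).ncard ≤ 4 := by
          calc ({P1, P2, P3', P6} : Set (Projectivization F (Fin 4 → F))).ncard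
              ≤ ({P2, P3', P6} : Set (Projectivization F (Fin 4 → F))).ncard + 1 :=
                Set.ncard_insert_le _ _
            _ ≤ (({P3', P6} : Set (Projectivization F (Fin 4 → F))).ncard + 1) + 1 := by
                have := Set.ncard_insert_le P2 ({P3', P6} :
                  Set (Projectivization F (Fin 4 → F)))
                omega
            _ ≤ ((({P6} : Set (Projectivization F (Fin 4 → F))).ncard + 1) + 1) + 1 := by
                have := Set.ncard_insert_le P3' ({P6} :
                  Set (Projectivization F (Fin 4 → F)))
                omega
            _ ≤ 4 := by rw [Set.ncard_singleton]
        have := ncard_diff_ge V {P1, P2, P3', P6} hfin4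
        omega
      obtain ⟨P4, hP4, P5, hP5, h45⟩ :=
        (Set.one_lt_ncard (s := V \ {P1, P2, P3', P6}) (projSet_finite _)).mp (by omega)
      have hP4V : P4 ∈ V := hP4.1
      have hP5V : P5 ∈ V := hP5.1
      have h14 : P4 ≠ P1 := fun h => hP4.2 (by rw [h]; simp)
      have h24 : P4 ≠ P2 := fun h => hP4.2 (by rw [h]; simp)
      have h34 : P4 ≠ P3' := fun h => hP4.2 (by rw [h]; simp)
      have h64 : P4 ≠ P6 := fun h => hP4.2 (by rw [h]; simp)
      have h15 : P5 ≠ P1 := fun h => hP5.2 (by rw [h]; simp)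
      have h25 : P5 ≠ P2 := fun h => hP5.2 (by rw [h]; simp)
      have h35 : P5 ≠ P3' := fun h => hP5.2 (by rw [h]; simp)
      have h65 : P5 ≠ P6 := fun h => hP5.2 (by rw [h]; simp)
      apply configCap Fs hli hhom P1 P2 P3' P4 P5 P6 hP1 hP2 hP3 hP4V hP5V hP6 h12
        (fun h => h34 h.symm)
        (hcap P1 P2 P3' hP1 hP2 hP3 h12 h13 h23)
        (hcap P1 P2 P4 hP1 hP2 hP4V h12 (fun h => h14 h.symm) (fun h => h24 h.symm))
        (hcap P1 P2 P5 hP1 hP2 hP5V h12 (fun h => h15 h.symm) (fun h => h25 h.symm))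
        (hcap P3' P4 P5 hP3 hP4V hP5V (fun h => h34 h.symm) (fun h => h35 h.symm) h45)
        h6s
        (hcap P4 P5 P6 hP4V hP5V hP6 h45 h64 h65)
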